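/- arXiv:1705.05286 — 5 statements merged into one kernel-verified Lean document; each statement's English description precedes it below -/
import Mathlib

section
/- For fixed 0 < τ < 1 and θ > 0, the function f_θ(d) = (1 − (1 − θ(1−τ)d)^{1/(1−τ)})/d is nonincreasing on the interval 0 < d < 1/(θ(1−τ)). -/
open Matrix
open scoped Matrix.Norms.L2Operator

variable {n : ℕ}

/-- largest singular value = spectral (ℓ²-operator) norm -/
noncomputable def sigma1 {m k : ℕ} (M : Matrix (Fin m) (Fin k) ℝ) : ℝ := ‖M‖

/-- Thompson part metric -/
noncomputable def dT (P Q : Matrix (Fin n) (Fin n) ℝ) : ℝ :=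
  max (Real.log (sigma1 (P⁻¹ * Q))) (Real.log (sigma1 (Q⁻¹ * P)))

/-- spectral function of a matrix: apply `f` to eigenvalues (0 if not Hermitian) -/
noncomputable def matFun (f : ℝ → ℝ) (A : Matrix (Fin n) (Fin n) ℝ) :
    Matrix (Fin n) (Fin n) ℝ :=
  if hA : A.IsHermitian then
    (hA.eigenvectorUnitary : Matrix (Fin n) (Fin n) ℝ) *
      diagonal (fun i => f (hA.eigenvalues i)) *
      star (hA.eigenvectorUnitary : Matrix (Fin n) (Fin n) ℝ)
  else 0

noncomputable def matRpow (A : Matrix (Fin n) (Fin n) ℝ) (r : ℝ) : Matrix (Fin n) (Fin n) ℝ :=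
  matFun (fun x => x ^ r) A

noncomputable def matExp (A : Matrix (Fin n) (Fin n) ℝ) : Matrix (Fin n) (Fin n) ℝ :=
  matFun Real.exp A


theorem f_theta_nonincreasing (τ θ : ℝ)
    (hτ0 : 0 < τ) (hτ1 : τ < 1) (hθ : 0 < θ) :
    AntitoneOn (fun d : ℝ => (1 - (1 - θ * (1 - τ) * d) ^ (1 / (1 - τ))) / d)
      (Set.Ioo 0 (1 / (θ * (1 - τ)))) := by

  set a := θ * (1 - τ) with ha
  have ha0 : 0 < a := mul_pos hθ (by linarith)
  have hq : (1:ℝ) ≤ 1 / (1 - τ) := by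
    rw [le_div_iff₀ (by linarith)]; linarith
  -- affine map d ↦ 1 - a * d
  set g : ℝ →ᵃ[ℝ] ℝ := AffineMap.lineMap (1:ℝ) (1 - a) with hg
  have hgval : ∀ d : ℝ, g d = 1 - a * d := by
    intro d
    simp [hg, AffineMap.lineMap_apply]
    ring
  have hconv : ConvexOn ℝ (g ⁻¹' Set.Ici 0)
      (fun d : ℝ => (g d) ^ (1 / (1 - τ))) :=
    (convexOn_rpow hq).comp_affineMap g
  intro x hx y hy hxy
  obtain ⟨hx0, hxu⟩ := hx
  obtain ⟨hy0, hyu⟩ := hy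
  have hmem : ∀ z : ℝ, 0 ≤ z → z < 1 / a → g z ∈ Set.Ici (0:ℝ) := by
    intro z hz hzu
    rw [hgval]
    have : a * z < 1 := by
      have := (lt_div_iff₀ ha0).mp hzu
      linarith [this]
    simp; nlinarith
  have h0 : (0:ℝ) ∈ g ⁻¹' Set.Ici 0 := hmem 0 le_rfl (by positivity)
  have hxm : x ∈ g ⁻¹' Set.Ici 0 := hmem x hx0.le hxu
  have hym : y ∈ g ⁻¹' Set.Ici 0 := hmem y hy0.le hyu
  have hs := hconv.secant_mono h0 hxm hym (ne_of_gt hx0) (ne_of_gt hy0) hxy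
  have hg0 : g 0 = 1 := by rw [hgval]; ring
  rw [hg0] at hs
  simp only [Real.one_rpow, sub_zero, hgval] at hs
  have hx0' : x ≠ 0 := ne_of_gt hx0
  have hy0' : y ≠ 0 := ne_of_gt hy0
  simp only
  rw [div_le_div_iff₀ hy0 hx0]
  rw [div_le_div_iff₀ hx0 hy0] at hs
  nlinarith [hs]
end

section
/- Let 0 < τ < 1, let P be an n×n positive definite matrix with Cholesky-type factorization P = L Lᵀ, and let θ satisfy 0 < θ < ((1−τ)‖P‖)⁻¹. Define V = L(I − θ(1−τ)LᵀL)^{1/(τ−1)} Lᵀ and Φ = P⁻¹ − V⁻¹. If P ≥ d̄ I with d̄ > 0, then Φ ≤ ((1 − (1 − θ(1−τ)d̄)^{1/(1−τ)})/d̄) · I. -/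
open Matrix
open scoped Matrix.Norms.L2Operator

variable {n : ℕ}

private lemma scalar_key {c d r lam : ℝ} (hc : 0 < c) (hd : 0 < d) (hr : 1 ≤ r)
    (hlam : 0 < lam) (hlam' : lam ≤ 1 - c * d) :
    0 ≤ (1 - (1 - c * d) ^ r) / d * c⁻¹ * (1 - lam) - 1 + lam ^ r := by
  set μ : ℝ := (1 - lam) / c with hμ
  have hμd : d ≤ μ := by
    rw [hμ, le_div_iff₀ hc]; linarith
  have hμ0 : 0 < μ := lt_of_lt_of_le hd hμd
  set t : ℝ := d / μ with ht
  have ht0 : 0 < t := div_pos hd hμ0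
  have ht1 : t ≤ 1 := by rw [ht, div_le_one hμ0]; exact hμd
  have hconv := (convexOn_rpow hr).2 (Set.mem_Ici.mpr hlam.le) (Set.mem_Ici.mpr zero_le_one)
      ht0.le (by linarith : (0:ℝ) ≤ 1 - t) (by ring)
  simp only [smul_eq_mul, mul_one, Real.one_rpow] at hconv
  have hcμ : c * μ = 1 - lam := by
    rw [hμ]; field_simp
  have key : t * lam + (1 - t) = 1 - c * d := by
    have htμ : t * μ = d := by rw [ht]; field_simp
    nlinarith [hcμ, htμ]
  rw [key] at hconv
  have hinv : (1 - (1 - c * d) ^ r) / d * c⁻¹ * (1 - lam) = (1 - (1 - c * d) ^ r) / d * μ := by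
    rw [hμ]; field_simp
  rw [hinv]
  have htμ : t * μ = d := by rw [ht]; field_simp
  have h2 : t * (1 - lam ^ r) ≤ (1 - (1 - c * d) ^ r) / d * (t * μ) := by
    rw [htμ]
    have : (1 - (1 - c * d) ^ r) / d * d = 1 - (1 - c * d) ^ r := by field_simp
    rw [this]; linarith
  have h3 : 1 - lam ^ r ≤ (1 - (1 - c * d) ^ r) / d * μ := by
    have := (mul_le_mul_iff_right₀ ht0).mp
      (by linarith [h2] : t * (1 - lam ^ r) ≤ t * ((1 - (1 - c * d) ^ r) / d * μ))
    linarith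
  linarith

private lemma dot_self_pos {n : ℕ} {w : Fin n → ℝ} (hw : w ≠ 0) : 0 < w ⬝ᵥ w := by
  obtain ⟨i, hi⟩ := Function.ne_iff.mp hw
  exact Finset.sum_pos' (fun j _ => mul_self_nonneg _)
    ⟨i, Finset.mem_univ i, mul_self_pos.mpr hi⟩

private lemma dot_sq {n : ℕ} (w : Fin n → ℝ) :
    w ⬝ᵥ w = ‖(EuclideanSpace.equiv (Fin n) ℝ).symm w‖ ^ 2 := by
  rw [EuclideanSpace.norm_eq, Real.sq_sqrt (by positivity)]
  simp [dotProduct, Real.norm_eq_abs, sq_abs, sq]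

private lemma herm_smul {n : ℕ} {M : Matrix (Fin n) (Fin n) ℝ} (h : M.IsHermitian) (a : ℝ) :
    (a • M).IsHermitian := by
  show (a • M)ᴴ = a • M
  rw [Matrix.conjTranspose_smul, star_trivial, h.eq]

private lemma psd_smul {n : ℕ} {M : Matrix (Fin n) (Fin n) ℝ} (hM : M.PosSemidef) {a : ℝ}
    (ha : 0 ≤ a) : (a • M).PosSemidef := by
  refine posSemidef_iff_dotProduct_mulVec.mpr ⟨herm_smul (posSemidef_iff_dotProduct_mulVec.mp hM).1 a, fun x => ?_⟩
  rw [Matrix.smul_mulVec, dotProduct_smul]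
  exact mul_nonneg ha ((posSemidef_iff_dotProduct_mulVec.mp hM).2 x)

private lemma conj_sandwich {n : ℕ} {U : Matrix (Fin n) (Fin n) ℝ} (hU : star U * U = 1)
    (D₁ D₂ : Matrix (Fin n) (Fin n) ℝ) :
    (U * D₁ * star U) * (U * D₂ * star U) = U * (D₁ * D₂) * star U := by
  have h : star U * (U * (D₂ * star U)) = D₂ * star U := by
    rw [← Matrix.mul_assoc, hU, one_mul]
  simp only [Matrix.mul_assoc, h]

theorem Phi_upper_bound_tau_lt_one {n : ℕ} (τ θ dbar : ℝ)
    (L P V Φ : Matrix (Fin n) (Fin n) ℝ)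
    (hτ0 : 0 < τ) (hτ1 : τ < 1)
    (hP : P.PosDef) (hPL : P = L * Lᵀ)
    (hθ0 : 0 < θ) (hθ : θ < ((1 - τ) * sigma1 P)⁻¹)
    (hd : 0 < dbar)
    (hPd : (P - dbar • (1 : Matrix (Fin n) (Fin n) ℝ)).PosSemidef)
    (hV : V = L * matRpow (1 - (θ * (1 - τ)) • (Lᵀ * L)) (1 / (τ - 1)) * Lᵀ)
    (hΦ : Φ = P⁻¹ - V⁻¹) :
    (((1 - (1 - θ * (1 - τ) * dbar) ^ (1 / (1 - τ))) / dbar) •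
        (1 : Matrix (Fin n) (Fin n) ℝ) - Φ).PosSemidef := by
  classical
  have hτ' : (0:ℝ) < 1 - τ := by linarith
  set c : ℝ := θ * (1 - τ) with hc_def
  have hc : 0 < c := mul_pos hθ0 hτ'
  set r : ℝ := 1 / (1 - τ) with hr_def
  have hr1 : 1 ≤ r := by
    rw [hr_def, le_div_iff₀ hτ']; linarith
  set A : Matrix (Fin n) (Fin n) ℝ := Lᵀ * L with hA_def
  set B : Matrix (Fin n) (Fin n) ℝ := 1 - c • A with hB_def
  set k : ℝ := (1 - (1 - c * dbar) ^ r) / dbar with hk_def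
  -- norm facts
  simp only [sigma1] at hθ
  have hPnorm : 0 < ‖P‖ := by
    have h1 : (0:ℝ) < ((1 - τ) * ‖P‖)⁻¹ := hθ0.trans hθ
    have h2 := inv_pos.mp h1
    nlinarith [norm_nonneg P]
  have hcP : c * ‖P‖ < 1 := by
    have h1 : (0:ℝ) < (1 - τ) * ‖P‖ := by positivity
    have h2 := mul_lt_mul_of_pos_right hθ h1
    rw [inv_mul_cancel₀ h1.ne'] at h2
    calc c * ‖P‖ = θ * ((1 - τ) * ‖P‖) := by rw [hc_def]; ring
    _ < 1 := h2
  -- L invertible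
  have hPdet : IsUnit P.det := isUnit_iff_ne_zero.mpr hP.det_pos.ne'
  have hdetL : IsUnit L.det := by
    rw [hPL, Matrix.det_mul, Matrix.det_transpose] at hPdet
    exact isUnit_of_mul_isUnit_left hPdet
  have hdetLT : IsUnit Lᵀ.det := by rwa [Matrix.det_transpose]
  -- hermitian facts
  have hA_herm : A.IsHermitian := by
    have h := Matrix.isHermitian_conjTranspose_mul_self L
    rwa [Matrix.conjTranspose_eq_transpose_of_trivial] at h
  have hB_herm : B.IsHermitian := Matrix.isHermitian_one.sub (herm_smul hA_herm c)
  -- quadratic form of A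
  have hAform : ∀ x : Fin n → ℝ, x ⬝ᵥ (A *ᵥ x) = (L *ᵥ x) ⬝ᵥ (L *ᵥ x) := by
    intro x
    rw [hA_def, ← Matrix.mulVec_mulVec, Matrix.dotProduct_mulVec, Matrix.vecMul_transpose]
  have hstar : ∀ x : Fin n → ℝ, star x = x := fun x => funext fun i => star_trivial _
  -- norm of L
  have hLnorm : ‖Lᵀ‖ * ‖Lᵀ‖ = ‖P‖ := by
    have h1 := Matrix.l2_opNorm_conjTranspose_mul_self Lᵀ
    rw [Matrix.conjTranspose_eq_transpose_of_trivial, Matrix.transpose_transpose] at h1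
    rw [hPL, h1]
  have hLT : ‖L‖ = ‖Lᵀ‖ := by
    have h := Matrix.l2_opNorm_conjTranspose L
    rw [Matrix.conjTranspose_eq_transpose_of_trivial] at h
    exact h.symm
  have hAbound : ∀ x : Fin n → ℝ, (L *ᵥ x) ⬝ᵥ (L *ᵥ x) ≤ ‖P‖ * (x ⬝ᵥ x) := by
    intro x
    have h := Matrix.l2_opNorm_mulVec L ((EuclideanSpace.equiv (Fin n) ℝ).symm x)
    have e1 : L *ᵥ ((EuclideanSpace.equiv (Fin n) ℝ).symm x) = L *ᵥ x := rfl
    rw [e1] at h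
    rw [dot_sq x, dot_sq (L *ᵥ x), ← hLnorm, ← hLT]
    nlinarith [norm_nonneg ((EuclideanSpace.equiv (Fin n) ℝ).symm x),
      norm_nonneg ((EuclideanSpace.equiv (Fin n) ℝ).symm (L *ᵥ x)), norm_nonneg L]
  -- B is positive definite
  have hBpd : B.PosDef := by
    refine posDef_iff_dotProduct_mulVec.mpr ⟨hB_herm, fun x hx => ?_⟩
    have hq : star x ⬝ᵥ (B *ᵥ x) = x ⬝ᵥ x - c * ((L *ᵥ x) ⬝ᵥ (L *ᵥ x)) := by
      rw [hstar, hB_def, Matrix.sub_mulVec, Matrix.one_mulVec, dotProduct_sub,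
        Matrix.smul_mulVec, dotProduct_smul, hAform, smul_eq_mul]
    rw [hq]
    have h1 := hAbound x
    have h2 : 0 < x ⬝ᵥ x := dot_self_pos hx
    nlinarith [hAform x, dot_self_pos hx]
  -- eigen decomposition of B
  set U : Matrix (Fin n) (Fin n) ℝ := (hB_herm.eigenvectorUnitary : Matrix (Fin n) (Fin n) ℝ)
    with hU_def
  set ev : Fin n → ℝ := hB_herm.eigenvalues with hev_def
  have hUstar : U * star U = 1 := Matrix.mem_unitaryGroup_iff.mp hB_herm.eigenvectorUnitary.2
  have hUstar' : star U * U = 1 := Matrix.mem_unitaryGroup_iff'.mp hB_herm.eigenvectorUnitary.2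
  have hBspec : B = U * Matrix.diagonal ev * star U := by
    have h := hB_herm.spectral_theorem
    rwa [RCLike.ofReal_real_eq_id, Function.id_comp] at h
  have hev_pos : ∀ i, 0 < ev i := fun i => hBpd.eigenvalues_pos i
  -- upper bound on eigenvalues of B
  have hQQ : (P * P - dbar • P).PosSemidef := by
    have hkey1 : (P - dbar • (1 : Matrix (Fin n) (Fin n) ℝ))ᴴ *
        (P - dbar • (1 : Matrix (Fin n) (Fin n) ℝ)) +
        dbar • (P - dbar • (1 : Matrix (Fin n) (Fin n) ℝ)) = P * P - dbar • P := by
      rw [hPd.1]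
      simp only [sub_mul, mul_sub, Matrix.smul_mul, Matrix.mul_smul, smul_sub, smul_smul,
        mul_one, one_mul]
      abel
    rw [← hkey1]
    exact (Matrix.posSemidef_conjTranspose_mul_self _).add (psd_smul hPd hd.le)
  have hMid : A - dbar • (1 : Matrix (Fin n) (Fin n) ℝ) =
      L⁻¹ * (P * P - dbar • P) * (Lᵀ)⁻¹ := by
    have e1 : L⁻¹ * (P * P) * (Lᵀ)⁻¹ = A := by
      rw [hPL, hA_def]
      simp only [Matrix.mul_assoc]
      rw [Matrix.nonsing_inv_mul_cancel_left _ _ hdetL]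
      rw [Matrix.mul_nonsing_inv _ hdetLT, Matrix.mul_one]
    have e2 : L⁻¹ * P * (Lᵀ)⁻¹ = 1 := by
      rw [hPL]
      simp only [Matrix.mul_assoc]
      rw [Matrix.nonsing_inv_mul_cancel_left _ _ hdetL, Matrix.mul_nonsing_inv _ hdetLT]
    rw [Matrix.mul_sub, Matrix.sub_mul, e1]
    rw [Matrix.mul_smul, Matrix.smul_mul, e2]
  have hAd : (A - dbar • (1 : Matrix (Fin n) (Fin n) ℝ)).PosSemidef := by
    rw [hMid]
    have h := hQQ.mul_mul_conjTranspose_same L⁻¹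
    rwa [Matrix.conjTranspose_eq_transpose_of_trivial, Matrix.transpose_nonsing_inv] at h
  have hupper : ∀ i, ev i ≤ 1 - c * dbar := by
    intro i
    have hpsd : ((1 - c * dbar) • (1 : Matrix (Fin n) (Fin n) ℝ) - B).PosSemidef := by
      have h0 : (1 - c * dbar) • (1 : Matrix (Fin n) (Fin n) ℝ) - B =
          c • (A - dbar • (1 : Matrix (Fin n) (Fin n) ℝ)) := by
        rw [hB_def]; module
      rw [h0]; exact psd_smul hAd hc.le
    have hv := hB_herm.mulVec_eigenvectorBasis i
    set v : Fin n → ℝ := ⇑(hB_herm.eigenvectorBasis i) with hv_def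
    have hv0 : v ≠ 0 := by
      intro h
      apply hB_herm.eigenvectorBasis.orthonormal.ne_zero i
      ext j
      exact congrFun h j
    have h2 := (posSemidef_iff_dotProduct_mulVec.mp hpsd).2 v
    rw [hstar, Matrix.sub_mulVec, Matrix.smul_mulVec, Matrix.one_mulVec, hv,
      dotProduct_sub, dotProduct_smul, dotProduct_smul] at h2
    have h3 := dot_self_pos hv0
    simp only [smul_eq_mul] at h2
    nlinarith [h2, h3]
  -- matRpow formula
  have hE : ∀ t : ℝ, matRpow B t = U * Matrix.diagonal (fun i => ev i ^ t) * star U := by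
    intro t
    rw [matRpow, matFun, dif_pos hB_herm]
  -- inverse relation between exponents
  have hτne : τ - 1 ≠ 0 := by linarith
  have hEE : matRpow B (1 / (τ - 1)) * matRpow B r = 1 := by
    rw [hE, hE, conj_sandwich hUstar', Matrix.diagonal_mul_diagonal]
    have hdiag : (fun i => ev i ^ (1 / (τ - 1)) * ev i ^ r) = fun _ => (1:ℝ) := by
      funext i
      rw [← Real.rpow_add (hev_pos i)]
      have : 1 / (τ - 1) + r = 0 := by rw [hr_def]; field_simp; ring
      rw [this, Real.rpow_zero]
    rw [hdiag, Matrix.diagonal_one, mul_one, hUstar]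
  -- inverse of V
  have hV_inv : V⁻¹ = (Lᵀ)⁻¹ * matRpow B r * L⁻¹ := by
    apply Matrix.inv_eq_right_inv
    rw [hV]
    simp only [Matrix.mul_assoc]
    rw [Matrix.mul_nonsing_inv_cancel_left _ _ hdetLT,
      ← Matrix.mul_assoc (matRpow B (1 / (τ - 1))) (matRpow B r) _, hEE, one_mul,
      Matrix.mul_nonsing_inv _ hdetL]
  have hP_inv : P⁻¹ = (Lᵀ)⁻¹ * L⁻¹ := by rw [hPL, Matrix.mul_inv_rev]
  -- define ψ
  set ψ : Fin n → ℝ := fun i => k * c⁻¹ * (1 - ev i) - 1 + ev i ^ r with hψ_def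
  have hψ0 : ∀ i, 0 ≤ ψ i := fun i => scalar_key hc hd hr1 (hev_pos i) (hupper i)
  -- diagonal decomposition
  have hdiagψ : Matrix.diagonal ψ = (k * c⁻¹) • (1 - Matrix.diagonal ev) -
      1 + Matrix.diagonal (fun i => ev i ^ r) := by
    ext i j
    by_cases h : i = j
    · subst h
      simp [Matrix.diagonal_apply_eq, Matrix.one_apply_eq, hψ_def]
    · simp [Matrix.diagonal_apply_ne _ h, Matrix.one_apply_ne h]
  have hM_eq : U * Matrix.diagonal ψ * star U =
      k • A - 1 + U * Matrix.diagonal (fun i => ev i ^ r) * star U := by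
    rw [hdiagψ]
    have expand : U * ((k * c⁻¹) • (1 - Matrix.diagonal ev) - 1 +
        Matrix.diagonal (fun i => ev i ^ r)) * star U =
        (k * c⁻¹) • (U * star U - U * Matrix.diagonal ev * star U) - U * star U +
          U * Matrix.diagonal (fun i => ev i ^ r) * star U := by
      simp only [Matrix.mul_sub, Matrix.sub_mul, Matrix.mul_add, Matrix.add_mul,
        Matrix.mul_smul, Matrix.smul_mul, Matrix.mul_one, smul_sub]
    rw [expand, hUstar, ← hBspec]
    congr 1
    congr 1
    have hcA : (k * c⁻¹) • ((1 : Matrix (Fin n) (Fin n) ℝ) - B) = k • A := by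
      rw [hB_def, sub_sub_cancel, smul_smul]
      congr 1
      field_simp
    rw [hcA]
  -- final identity
  have hfinal : k • (1 : Matrix (Fin n) (Fin n) ℝ) - Φ =
      ((Lᵀ)⁻¹ * U) * Matrix.diagonal ψ * ((Lᵀ)⁻¹ * U)ᴴ := by
    have hct : ((Lᵀ)⁻¹ * U)ᴴ = star U * L⁻¹ := by
      rw [Matrix.conjTranspose_mul, Matrix.conjTranspose_eq_transpose_of_trivial (Lᵀ)⁻¹,
        ← Matrix.transpose_nonsing_inv, Matrix.transpose_transpose,
        Matrix.star_eq_conjTranspose, Matrix.conjTranspose_eq_transpose_of_trivial,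
        ]
    have e3 : (Lᵀ)⁻¹ * (k • A) * L⁻¹ = k • (1 : Matrix (Fin n) (Fin n) ℝ) := by
      rw [Matrix.mul_smul, Matrix.smul_mul]
      have : (Lᵀ)⁻¹ * A * L⁻¹ = 1 := by
        rw [hA_def]
        simp only [Matrix.mul_assoc]
        rw [Matrix.nonsing_inv_mul_cancel_left _ _ hdetLT, Matrix.mul_nonsing_inv _ hdetL]
      rw [this]
    have h9 : (Lᵀ)⁻¹ * U * Matrix.diagonal ψ * (star U * L⁻¹) =
        (Lᵀ)⁻¹ * (U * Matrix.diagonal ψ * star U) * L⁻¹ := by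
      simp only [Matrix.mul_assoc]
    rw [hct, h9, hM_eq, hΦ, hP_inv, hV_inv, hE]
    simp only [Matrix.mul_add, Matrix.add_mul, Matrix.mul_sub, Matrix.sub_mul, Matrix.mul_one]
    rw [e3]
    abel
  rw [hfinal]
  exact (Matrix.PosSemidef.diagonal hψ0).mul_mul_conjTranspose_same _
end

section
/- Let P be an n×n positive definite matrix with P = L Lᵀ and let θ > 0. Define V = L exp(θ LᵀL) Lᵀ and Φ = P⁻¹ − V⁻¹. If P ≥ d̄ I with d̄ > 0, then Φ ≤ ((1 − exp(−θ d̄))/d̄) · I. -/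
open Matrix
open scoped Matrix.Norms.L2Operator

variable {n : ℕ}

lemma scalar_ineq {a b : ℝ} (hb : 0 < b) (hab : b ≤ a) :
    b * (1 - Real.exp (-a)) ≤ a * (1 - Real.exp (-b)) := by
  have ha : 0 < a := hb.trans_le hab
  have hc := convexOn_exp.2 (Set.mem_univ (-a)) (Set.mem_univ (0:ℝ))
      (by positivity : (0:ℝ) ≤ b / a)
      (by rw [sub_nonneg]; exact div_le_one_of_le₀ hab ha.le : (0:ℝ) ≤ 1 - b / a)
      (by ring)
  simp only [smul_eq_mul, mul_zero, add_zero, Real.exp_zero, mul_one] at hc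
  rw [show b / a * -a = -b by field_simp] at hc
  have h2 := mul_le_mul_of_nonneg_left hc ha.le
  rw [mul_add, ← mul_assoc, mul_div_cancel₀ _ ha.ne', mul_sub, mul_div_cancel₀ _ ha.ne', mul_one] at h2
  have hea := Real.exp_pos (-a)
  have heb := Real.exp_pos (-b)
  nlinarith

theorem Phi_upper_bound_tau_eq_one {n : ℕ} (θ dbar : ℝ)
    (L P V Φ : Matrix (Fin n) (Fin n) ℝ)
    (hP : P.PosDef) (hPL : P = L * Lᵀ) (hθ0 : 0 < θ)
    (hd : 0 < dbar)
    (hPd : (P - dbar • (1 : Matrix (Fin n) (Fin n) ℝ)).PosSemidef)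
    (hV : V = L * matExp (θ • (Lᵀ * L)) * Lᵀ)
    (hΦ : Φ = P⁻¹ - V⁻¹) :
    (((1 - Real.exp (-θ * dbar)) / dbar) •
        (1 : Matrix (Fin n) (Fin n) ℝ) - Φ).PosSemidef := by
  set c : ℝ := (1 - Real.exp (-θ * dbar)) / dbar with hc
  -- L invertible
  have hLdet : IsUnit L.det := by
    have h : IsUnit P.det := hP.det_pos.ne'.isUnit
    rw [hPL, det_mul, det_transpose] at h
    exact isUnit_of_mul_isUnit_left h
  have hLtdet : IsUnit Lᵀ.det := by rwa [det_transpose]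
  -- Hermitian structure
  set A : Matrix (Fin n) (Fin n) ℝ := θ • (Lᵀ * L) with hAdef
  have hA : A.IsHermitian := by
    show Aᴴ = A
    rw [hAdef]
    simp [conjTranspose_eq_transpose_of_trivial, transpose_mul]
  set U : Matrix (Fin n) (Fin n) ℝ := (hA.eigenvectorUnitary : Matrix (Fin n) (Fin n) ℝ) with hU
  set μ : Fin n → ℝ := hA.eigenvalues with hμ
  have hUU : star U * U = 1 :=
    (Matrix.mem_unitaryGroup_iff').mp hA.eigenvectorUnitary.2
  have hUU' : U * star U = 1 :=
    (Matrix.mem_unitaryGroup_iff).mp hA.eigenvectorUnitary.2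
  have hspec : A = U * diagonal μ * star U := by
    simpa using hA.spectral_theorem
  -- eigenvalue lower bound
  have heig : ∀ i, θ * dbar ≤ μ i := by
    intro i
    set v : Fin n → ℝ := ⇑(hA.eigenvectorBasis i) with hv
    have hmv : A *ᵥ v = μ i • v := hA.mulVec_eigenvectorBasis i
    have hvne : v ≠ 0 := by
      have := hA.eigenvectorBasis.orthonormal.ne_zero i
      intro h; apply this
      ext j; exact congrFun h j
    have hSv : (Lᵀ * L) *ᵥ v = (μ i / θ) • v := by
      have h1 : θ • ((Lᵀ * L) *ᵥ v) = μ i • v := by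
        rw [← smul_mulVec]; exact hmv
      have h2 := congrArg (fun w => θ⁻¹ • w) h1
      simp only [smul_smul, inv_mul_cancel₀ hθ0.ne', one_smul] at h2
      rw [h2, div_eq_inv_mul]
    set x : Fin n → ℝ := L *ᵥ v with hx
    have hxne : x ≠ 0 := by
      intro h
      apply hvne
      have := congrArg (fun w => L⁻¹ *ᵥ w) h
      simpa [hx, mulVec_mulVec, nonsing_inv_mul L hLdet] using this
    have hPx : P *ᵥ x = (μ i / θ) • x := by
      rw [hx, mulVec_mulVec, hPL, Matrix.mul_assoc, ← mulVec_mulVec, hSv]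
      simp [mulVec_smul]
    have hdot := hPd.dotProduct_mulVec_nonneg x
    have hxx : 0 < x ⬝ᵥ x := by
      have hnn : 0 ≤ x ⬝ᵥ x := Finset.sum_nonneg fun j _ => mul_self_nonneg _
      have hne : x ⬝ᵥ x ≠ 0 := fun h => hxne (dotProduct_self_eq_zero.mp h)
      exact lt_of_le_of_ne hnn (Ne.symm hne)
    have : 0 ≤ (μ i / θ - dbar) * (x ⬝ᵥ x) := by
      have hexp : (P - dbar • 1) *ᵥ x = (μ i / θ - dbar) • x := by
        rw [sub_mulVec, hPx, smul_mulVec, one_mulVec, sub_smul]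
      rw [hexp] at hdot
      simpa [dotProduct_smul, smul_eq_mul] using hdot
    have h1 : dbar ≤ μ i / θ := by nlinarith
    have h2 := (le_div_iff₀ hθ0).mp h1
    linarith
  -- the inverse of matExp A
  have hEdef : matExp A = U * diagonal (fun i => Real.exp (μ i)) * star U := by
    rw [matExp, matFun, dif_pos hA]
  set Einv : Matrix (Fin n) (Fin n) ℝ :=
    U * diagonal (fun i => Real.exp (-μ i)) * star U with hEinvdef
  have hmulE : matExp A * Einv = 1 := by
    rw [hEdef, hEinvdef]
    calc U * diagonal (fun i => Real.exp (μ i)) * star U *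
          (U * diagonal (fun i => Real.exp (-μ i)) * star U)
        = U * diagonal (fun i => Real.exp (μ i)) * (star U * U) *
            diagonal (fun i => Real.exp (-μ i)) * star U := by
          simp only [Matrix.mul_assoc]
      _ = U * (diagonal (fun i => Real.exp (μ i)) *
            diagonal (fun i => Real.exp (-μ i))) * star U := by
          rw [hUU]; simp only [Matrix.mul_one, Matrix.mul_assoc]
      _ = 1 := by
          rw [diagonal_mul_diagonal]
          simp only [← Real.exp_add, add_neg_cancel, Real.exp_zero, diagonal_one,
            Matrix.mul_one, hUU']
  have hEinv_eq : (matExp A)⁻¹ = Einv := inv_eq_right_inv hmulE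
  have hVinv : V⁻¹ = Lᵀ⁻¹ * Einv * L⁻¹ := by
    rw [hV, Matrix.mul_inv_rev, Matrix.mul_inv_rev, hEinv_eq, hEinvdef]
    simp only [Matrix.mul_assoc]
  have hPinv : P⁻¹ = Lᵀ⁻¹ * L⁻¹ := by
    rw [hPL, Matrix.mul_inv_rev]
  -- assembling the goal matrix
  have e1 : Lᵀ⁻¹ * (Lᵀ * L) * L⁻¹ = 1 := by
    rw [← Matrix.mul_assoc, Matrix.nonsing_inv_mul _ hLtdet, Matrix.one_mul,
      Matrix.mul_nonsing_inv _ hLdet]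
  have hM1 : U * diagonal (fun i => c / θ * μ i - 1 + Real.exp (-μ i)) * star U
      = c • (Lᵀ * L) - 1 + Einv := by
    have hdiag : (diagonal (fun i => c / θ * μ i - 1 + Real.exp (-μ i))
          : Matrix (Fin n) (Fin n) ℝ)
        = (c / θ) • diagonal μ - 1 + diagonal (fun i => Real.exp (-μ i)) := by
      ext j k
      by_cases h : j = k
      · subst h; simp [smul_eq_mul]
      · simp [Matrix.diagonal_apply_ne _ h, Matrix.one_apply_ne h]
    rw [hdiag, Matrix.mul_add, Matrix.add_mul, Matrix.mul_sub, Matrix.sub_mul,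
      Matrix.mul_one, mul_smul_comm, smul_mul_assoc, ← hspec, hAdef, smul_smul,
      div_mul_cancel₀ _ hθ0.ne', hUU']
  have hgoal : c • (1 : Matrix (Fin n) (Fin n) ℝ) - Φ
      = Lᵀ⁻¹ * (c • (Lᵀ * L) - 1 + Einv) * L⁻¹ := by
    rw [hΦ, hVinv, hPinv, Matrix.mul_add, Matrix.add_mul, Matrix.mul_sub,
      Matrix.sub_mul, Matrix.mul_one, mul_smul_comm, smul_mul_assoc, e1,
      ← Matrix.mul_assoc]
    abel
  -- positivity
  have hDpsd : (diagonal (fun i => c / θ * μ i - 1 + Real.exp (-μ i))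
      : Matrix (Fin n) (Fin n) ℝ).PosSemidef := by
    refine posSemidef_diagonal_iff.mpr fun i => ?_
    have hb : 0 < θ * dbar := mul_pos hθ0 hd
    have hs := scalar_ineq hb (heig i)
    have hcb : c / θ * (θ * dbar) = 1 - Real.exp (-(θ * dbar)) := by
      rw [hc, neg_mul]
      field_simp
    rw [← hcb] at hs
    have h3 : (θ * dbar) * (1 - Real.exp (-μ i)) ≤ (θ * dbar) * (c / θ * μ i) :=
      hs.trans_eq (by ring)
    have h4 : 1 - Real.exp (-μ i) ≤ c / θ * μ i := le_of_mul_le_mul_left h3 hb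
    linarith
  have hMpsd := (hDpsd.mul_mul_conjTranspose_same U)
  rw [← Matrix.star_eq_conjTranspose] at hMpsd
  have hfinal := hMpsd.mul_mul_conjTranspose_same (Lᵀ⁻¹)
  have hBH : (Lᵀ⁻¹)ᴴ = L⁻¹ := by
    rw [conjTranspose_eq_transpose_of_trivial, Matrix.transpose_nonsing_inv,
      transpose_transpose]
  rw [hBH] at hfinal
  rw [hgoal, ← hM1]
  exact hfinal
end

section
/- For 0 < τ < 1 and fixed θ with 0 < θ < ((1−τ)‖P‖)⁻¹, the function γ_τ(P, θ) = tr(−(1/(τ(1−τ)))(I − θ(1−τ)P)^{τ/(τ−1)} + (1/(1−τ))(I − θ(1−τ)P)^{1/(τ−1)} + (1/τ)I) is monotone nondecreasing in P: if P ≥ Q ≥ 0 (with both satisfying the θ-bound) then γ_τ(P, θ) ≥ γ_τ(Q, θ). -/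
open Matrix
open scoped Matrix.Norms.L2Operator

variable {n : ℕ}

noncomputable def gammaTau {n : ℕ} (τ θ : ℝ) (P : Matrix (Fin n) (Fin n) ℝ) : ℝ :=
  ((-(1/(τ*(1-τ)))) • matRpow (1 - (θ*(1-τ)) • P) (τ/(τ-1))
    + (1/(1-τ)) • matRpow (1 - (θ*(1-τ)) • P) (1/(τ-1))
    + (1/τ) • (1 : Matrix (Fin n) (Fin n) ℝ)).trace


section Aux
open Real Set

noncomputable def gfun (τ : ℝ) (t : ℝ) : ℝ :=
  -(1/(τ*(1-τ))) * t ^ (τ/(τ-1)) + (1/(1-τ)) * t ^ (1/(τ-1)) + 1/τ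

private lemma gfun_def (τ : ℝ) : gfun τ =
    fun t => -(1/(τ*(1-τ))) * t ^ (τ/(τ-1)) + (1/(1-τ)) * t ^ (1/(τ-1)) + 1/τ := rfl

private lemma gfun_hasDerivAt (τ : ℝ) {x : ℝ} (hx : x ≠ 0) :
    HasDerivAt (gfun τ)
      (-(1/(τ*(1-τ))) * (τ/(τ-1) * x ^ (τ/(τ-1) - 1))
        + (1/(1-τ)) * (1/(τ-1) * x ^ (1/(τ-1) - 1))) x := by
  have h1 := (Real.hasDerivAt_rpow_const (x := x) (p := τ/(τ-1)) (Or.inl hx)).const_mul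
    (-(1/(τ*(1-τ))))
  have h2 := (Real.hasDerivAt_rpow_const (x := x) (p := 1/(τ-1)) (Or.inl hx)).const_mul
    (1/(1-τ))
  rw [gfun_def]
  simpa using (h1.add h2).add_const (1/τ)

private lemma gderiv_hasDerivAt (τ : ℝ) {x : ℝ} (hx : x ≠ 0) :
    HasDerivAt (fun x => -(1/(τ*(1-τ))) * (τ/(τ-1) * x ^ (τ/(τ-1) - 1))
        + (1/(1-τ)) * (1/(τ-1) * x ^ (1/(τ-1) - 1)))
      (-(1/(τ*(1-τ))) * (τ/(τ-1) * ((τ/(τ-1) - 1) * x ^ (τ/(τ-1) - 1 - 1)))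
        + (1/(1-τ)) * (1/(τ-1) * ((1/(τ-1) - 1) * x ^ (1/(τ-1) - 1 - 1)))) x := by
  have h1 := ((Real.hasDerivAt_rpow_const (x := x) (p := τ/(τ-1) - 1) (Or.inl hx)).const_mul
    (τ/(τ-1))).const_mul (-(1/(τ*(1-τ))))
  have h2 := ((Real.hasDerivAt_rpow_const (x := x) (p := 1/(τ-1) - 1) (Or.inl hx)).const_mul
    (1/(τ-1))).const_mul (1/(1-τ))
  simpa using h1.fun_add h2

private lemma gfun_continuousOn (τ : ℝ) : ContinuousOn (gfun τ) (Ioc (0:ℝ) 1) := by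
  intro x hx
  have hx0 : x ≠ 0 := ne_of_gt hx.1
  exact (((continuousAt_const.mul (Real.continuousAt_rpow_const x _ (Or.inl hx0))).add
    (continuousAt_const.mul (Real.continuousAt_rpow_const x _ (Or.inl hx0)))).add
      continuousAt_const).continuousWithinAt

private lemma gfun_deriv_nonpos (τ : ℝ) (hτ0 : 0 < τ) (hτ1 : τ < 1) {x : ℝ} (hx0 : 0 < x) (hx1 : x ≤ 1) :
    -(1/(τ*(1-τ))) * (τ/(τ-1) * x ^ (τ/(τ-1) - 1))
        + (1/(1-τ)) * (1/(τ-1) * x ^ (1/(τ-1) - 1)) ≤ 0 := by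
  have hτ1' : τ - 1 ≠ 0 := by intro h; nlinarith
  have hτ0' : τ ≠ 0 := ne_of_gt hτ0
  have hτ2' : (1:ℝ) - τ ≠ 0 := by intro h; nlinarith
  have hdiff : τ/(τ-1) - 1/(τ-1) = 1 := by field_simp
  have hle : x ^ (τ/(τ-1) - 1) ≤ x ^ (1/(τ-1) - 1) :=
    Real.rpow_le_rpow_of_exponent_ge hx0 hx1 (by linarith)
  have e1 : -(1/(τ*(1-τ))) * (τ/(τ-1)) = 1/(1-τ)^2 := by field_simp; ring
  have e2 : (1/(1-τ)) * (1/(τ-1)) = -(1/(1-τ)^2) := by field_simp; ring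
  have h : -(1/(τ*(1-τ))) * (τ/(τ-1) * x ^ (τ/(τ-1) - 1))
        + (1/(1-τ)) * (1/(τ-1) * x ^ (1/(τ-1) - 1))
      = (1/(1-τ)^2) * (x ^ (τ/(τ-1) - 1) - x ^ (1/(τ-1) - 1)) := by
    rw [← mul_assoc, ← mul_assoc, e1, e2]; ring
  rw [h]
  apply mul_nonpos_of_nonneg_of_nonpos
  · positivity
  · linarith

private lemma gfun_deriv2_nonneg (τ : ℝ) (hτ0 : 0 < τ) (hτ1 : τ < 1) {x : ℝ} (hx0 : 0 < x) (hx1 : x ≤ 1) :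
    0 ≤ -(1/(τ*(1-τ))) * (τ/(τ-1) * ((τ/(τ-1) - 1) * x ^ (τ/(τ-1) - 1 - 1)))
        + (1/(1-τ)) * (1/(τ-1) * ((1/(τ-1) - 1) * x ^ (1/(τ-1) - 1 - 1))) := by
  have hτ1' : τ - 1 ≠ 0 := by intro h; nlinarith
  have hτ0' : τ ≠ 0 := ne_of_gt hτ0
  have hτ2' : (1:ℝ) - τ ≠ 0 := by intro h; nlinarith
  have hdiff : τ/(τ-1) - 1/(τ-1) = 1 := by field_simp
  have hle : x ^ (τ/(τ-1) - 1 - 1) ≤ x ^ (1/(τ-1) - 1 - 1) :=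
    Real.rpow_le_rpow_of_exponent_ge hx0 hx1 (by linarith)
  have hz : (0:ℝ) < x ^ (τ/(τ-1) - 1 - 1) := Real.rpow_pos_of_pos hx0 _
  have e1 : -(1/(τ*(1-τ))) * (τ/(τ-1) * (τ/(τ-1) - 1)) = -(1/(1-τ)^3) := by field_simp; ring
  have e2 : (1/(1-τ)) * (1/(τ-1) * (1/(τ-1) - 1)) = (2-τ)/(1-τ)^3 := by field_simp; ring
  have h : -(1/(τ*(1-τ))) * (τ/(τ-1) * ((τ/(τ-1) - 1) * x ^ (τ/(τ-1) - 1 - 1)))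
        + (1/(1-τ)) * (1/(τ-1) * ((1/(τ-1) - 1) * x ^ (1/(τ-1) - 1 - 1)))
      = (-(1/(τ*(1-τ))) * (τ/(τ-1) * (τ/(τ-1) - 1))) * x ^ (τ/(τ-1) - 1 - 1)
        + ((1/(1-τ)) * (1/(τ-1) * (1/(τ-1) - 1))) * x ^ (1/(τ-1) - 1 - 1) := by ring
  rw [h, e1, e2]
  have hpos : (0:ℝ) < (1-τ)^3 := by
    apply pow_pos; linarith
  have hw : (0:ℝ) < x ^ (1/(τ-1) - 1 - 1) := Real.rpow_pos_of_pos hx0 _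
  have hkey : x ^ (τ/(τ-1) - 1 - 1) ≤ (2-τ) * x ^ (1/(τ-1) - 1 - 1) := by nlinarith
  have : -(1/(1-τ)^3) * x ^ (τ/(τ-1) - 1 - 1) + (2-τ)/(1-τ)^3 * x ^ (1/(τ-1) - 1 - 1)
      = ((2-τ) * x ^ (1/(τ-1) - 1 - 1) - x ^ (τ/(τ-1) - 1 - 1)) / (1-τ)^3 := by ring
  rw [this]
  apply div_nonneg (by linarith) hpos.le

private lemma gfun_antitoneOn (τ : ℝ) (hτ0 : 0 < τ) (hτ1 : τ < 1) :
    AntitoneOn (gfun τ) (Ioc (0:ℝ) 1) := by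
  apply antitoneOn_of_deriv_nonpos (convex_Ioc 0 1) (gfun_continuousOn τ)
  · intro x hx
    rw [interior_Ioc] at hx
    exact (gfun_hasDerivAt τ (ne_of_gt hx.1)).differentiableAt.differentiableWithinAt
  · intro x hx
    rw [interior_Ioc] at hx
    rw [(gfun_hasDerivAt τ (ne_of_gt hx.1)).deriv]
    exact gfun_deriv_nonpos τ hτ0 hτ1 hx.1 hx.2.le

private lemma gfun_convexOn (τ : ℝ) (hτ0 : 0 < τ) (hτ1 : τ < 1) :
    ConvexOn ℝ (Ioc (0:ℝ) 1) (gfun τ) := by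
  apply convexOn_of_hasDerivWithinAt2_nonneg (convex_Ioc 0 1) (gfun_continuousOn τ)
    (f' := fun x => -(1/(τ*(1-τ))) * (τ/(τ-1) * x ^ (τ/(τ-1) - 1))
        + (1/(1-τ)) * (1/(τ-1) * x ^ (1/(τ-1) - 1)))
    (f'' := fun x => -(1/(τ*(1-τ))) * (τ/(τ-1) * ((τ/(τ-1) - 1) * x ^ (τ/(τ-1) - 1 - 1)))
        + (1/(1-τ)) * (1/(τ-1) * ((1/(τ-1) - 1) * x ^ (1/(τ-1) - 1 - 1))))
  · intro x hx
    rw [interior_Ioc] at hx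
    exact (gfun_hasDerivAt τ (ne_of_gt hx.1)).hasDerivWithinAt
  · intro x hx
    rw [interior_Ioc] at hx
    exact (gderiv_hasDerivAt τ (ne_of_gt hx.1)).hasDerivWithinAt
  · intro x hx
    rw [interior_Ioc] at hx
    exact gfun_deriv2_nonneg τ hτ0 hτ1 hx.1 hx.2.le


lemma diag_nonneg' {n : ℕ} {M : Matrix (Fin n) (Fin n) ℝ} (hM : M.PosSemidef) (j : Fin n) :
    0 ≤ M j j := by
  have := hM.dotProduct_mulVec_nonneg (Pi.single j 1)
  simpa [dotProduct, mulVec, Pi.single_apply] using this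

lemma smul_posSemidef {n : ℕ} {M : Matrix (Fin n) (Fin n) ℝ} (hM : M.PosSemidef) {c : ℝ}
    (hc : 0 ≤ c) : (c • M).PosSemidef := by
  refine ⟨?_, fun x => ?_⟩
  · unfold Matrix.IsHermitian
    rw [conjTranspose_smul, hM.1]
    simp
  · exact (hM.smul hc).2 x

lemma sum_f_eigen_le {n : ℕ} (f : ℝ → ℝ) (D : Set ℝ) (hDc : Convex ℝ D)
    (hconv : ConvexOn ℝ D f) (hanti : AntitoneOn f D)
    {A B : Matrix (Fin n) (Fin n) ℝ} (hA : A.IsHermitian) (hB : B.IsHermitian)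
    (hAB : (B - A).PosSemidef)
    (hAeig : ∀ i, hA.eigenvalues i ∈ D) (hBeig : ∀ i, hB.eigenvalues i ∈ D) :
    ∑ j, f (hB.eigenvalues j) ≤ ∑ i, f (hA.eigenvalues i) := by
  set U : Matrix (Fin n) (Fin n) ℝ := (hA.eigenvectorUnitary : Matrix (Fin n) (Fin n) ℝ) with hU
  set V : Matrix (Fin n) (Fin n) ℝ := (hB.eigenvectorUnitary : Matrix (Fin n) (Fin n) ℝ) with hV
  have hUU : star U * U = 1 := Unitary.coe_star_mul_self hA.eigenvectorUnitary
  have hUU' : U * star U = 1 := Unitary.coe_mul_star_self hA.eigenvectorUnitary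
  have hVV : star V * V = 1 := Unitary.coe_star_mul_self hB.eigenvectorUnitary
  have hVV' : V * star V = 1 := Unitary.coe_mul_star_self hB.eigenvectorUnitary
  set W : Matrix (Fin n) (Fin n) ℝ := star V * U with hWdef
  have hWW' : W * star W = 1 := by
    rw [hWdef, StarMul.star_mul, star_star, Matrix.mul_assoc, ← Matrix.mul_assoc U, hUU',
      Matrix.one_mul, hVV]
  have hW'W : star W * W = 1 := by
    rw [hWdef, StarMul.star_mul, star_star, ← Matrix.mul_assoc, Matrix.mul_assoc (star U), hVV',
      Matrix.mul_one, hUU]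
  have hrow : ∀ j, ∑ i, (W j i)^2 = 1 := by
    intro j
    have h := congrFun (congrFun hWW' j) j
    simp only [Matrix.mul_apply, Matrix.one_apply_eq, Matrix.star_apply, star_trivial] at h
    rw [← h]
    exact Finset.sum_congr rfl fun i _ => by rw [sq]
  have hcol : ∀ i, ∑ j, (W j i)^2 = 1 := by
    intro i
    have h := congrFun (congrFun hW'W i) i
    simp only [Matrix.mul_apply, Matrix.one_apply_eq, Matrix.star_apply, star_trivial] at h
    rw [← h]
    exact Finset.sum_congr rfl fun j _ => by rw [sq]
  have hVAV : star V * A * V = W * Matrix.diagonal hA.eigenvalues * star W := by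
    conv_lhs => rw [hA.spectral_theorem]
    rw [hWdef, StarMul.star_mul, star_star]
    simp only [Unitary.conjStarAlgAut_apply, RCLike.ofReal_real_eq_id, Function.comp_def, id]
    noncomm_ring
  have hVAVd : ∀ j, (star V * A * V) j j = ∑ i, (W j i)^2 * hA.eigenvalues i := by
    intro j
    rw [hVAV, Matrix.mul_apply]
    refine Finset.sum_congr rfl fun i _ => ?_
    rw [Matrix.mul_diagonal, Matrix.star_apply, star_trivial]
    ring
  have hVBVd : ∀ j, (star V * B * V) j j = hB.eigenvalues j := by
    intro j
    have h := hB.conjStarAlgAut_star_eigenvectorUnitary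
    simp only [Unitary.conjStarAlgAut_apply, Unitary.coe_star, star_star, RCLike.ofReal_real_eq_id, Function.comp_def, id] at h
    rw [← hV] at h
    rw [h, Matrix.diagonal_apply_eq]
  have hps : (star V * (B - A) * V).PosSemidef := hAB.conjTranspose_mul_mul_same V
  have key3 : ∀ j, ∑ i, (W j i)^2 * hA.eigenvalues i ≤ hB.eigenvalues j := by
    intro j
    have h0 : 0 ≤ (star V * (B - A) * V) j j := diag_nonneg' hps j
    have hsplit : star V * (B - A) * V = star V * B * V - star V * A * V := by
      rw [Matrix.mul_sub, Matrix.sub_mul]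
    rw [hsplit, Matrix.sub_apply, hVBVd, hVAVd] at h0
    linarith
  have hmem : ∀ j, ∑ i, (W j i)^2 * hA.eigenvalues i ∈ D := by
    intro j
    have := hDc.sum_mem (t := Finset.univ) (w := fun i => (W j i)^2)
      (z := fun i => hA.eigenvalues i) (fun i _ => sq_nonneg _) (hrow j) (fun i _ => hAeig i)
    simpa [smul_eq_mul] using this
  have step : ∀ j, f (hB.eigenvalues j) ≤ ∑ i, (W j i)^2 * f (hA.eigenvalues i) := by
    intro j
    have h1 : f (hB.eigenvalues j) ≤ f (∑ i, (W j i)^2 * hA.eigenvalues i) :=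
      hanti (hmem j) (hBeig j) (key3 j)
    have h2 := hconv.map_sum_le (t := Finset.univ) (w := fun i => (W j i)^2)
      (p := fun i => hA.eigenvalues i) (fun i _ => sq_nonneg _) (hrow j) (fun i _ => hAeig i)
    simp only [smul_eq_mul] at h2
    exact h1.trans h2
  calc ∑ j, f (hB.eigenvalues j) ≤ ∑ j, ∑ i, (W j i)^2 * f (hA.eigenvalues i) :=
        Finset.sum_le_sum fun j _ => step j
    _ = ∑ i, (∑ j, (W j i)^2) * f (hA.eigenvalues i) := by
        rw [Finset.sum_comm]
        exact Finset.sum_congr rfl fun i _ => by rw [Finset.sum_mul]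
    _ = ∑ i, f (hA.eigenvalues i) := Finset.sum_congr rfl fun i _ => by rw [hcol, one_mul]

lemma trace_matFun {n : ℕ} (f : ℝ → ℝ) {A : Matrix (Fin n) (Fin n) ℝ} (hA : A.IsHermitian) :
    (matFun f A).trace = ∑ i, f (hA.eigenvalues i) := by
  rw [matFun, dif_pos hA, Matrix.trace_mul_comm, ← Matrix.mul_assoc,
    Unitary.coe_star_mul_self hA.eigenvectorUnitary, Matrix.one_mul, Matrix.trace_diagonal]

lemma one_sub_smul_isHermitian {n : ℕ} {P : Matrix (Fin n) (Fin n) ℝ} (hP : P.IsHermitian)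
    (s : ℝ) : (1 - s • P : Matrix (Fin n) (Fin n) ℝ).IsHermitian := by
  unfold Matrix.IsHermitian
  rw [conjTranspose_sub, conjTranspose_smul, conjTranspose_one, hP]
  simp

lemma eig_mem_Ioc {n : ℕ} {P : Matrix (Fin n) (Fin n) ℝ} (hP : P.PosSemidef) {s : ℝ}
    (hs : 0 < s) (hPb : ‖P‖ < s⁻¹)
    (hA : (1 - s • P : Matrix (Fin n) (Fin n) ℝ).IsHermitian) (i : Fin n) :
    hA.eigenvalues i ∈ Set.Ioc (0:ℝ) 1 := by
  set v : EuclideanSpace ℝ (Fin n) := hA.eigenvectorBasis i with hv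
  have hvnorm : ‖v‖ = 1 := hA.eigenvectorBasis.orthonormal.1 i
  have heig := hA.eigenvalues_eq i
  rw [← hv] at heig
  set x : Fin n → ℝ := (WithLp.equiv 2 (Fin n → ℝ)) v with hxdef
  have hstar : star x = x := by funext j; simp
  set q : ℝ := x ⬝ᵥ (P *ᵥ x) with hq
  have hq0 : 0 ≤ q := by
    have := hP.dotProduct_mulVec_nonneg x
    rwa [hstar] at this
  have hinner : ∀ w : EuclideanSpace ℝ (Fin n),
      inner (𝕜 := ℝ) v w = x ⬝ᵥ (WithLp.equiv 2 (Fin n → ℝ)) w := by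
    intro w
    rw [PiLp.inner_apply]
    simp [dotProduct, hxdef, mul_comm]
  have hvv : x ⬝ᵥ x = 1 := by
    rw [← hinner v, real_inner_self_eq_norm_sq, hvnorm, one_pow]
  have heig2 : hA.eigenvalues i = 1 - s * q := by
    rw [heig, show v.ofLp = x from rfl, hstar]
    have hmv : (1 - s • P : Matrix (Fin n) (Fin n) ℝ) *ᵥ x = x - s • (P *ᵥ x) := by
      rw [Matrix.sub_mulVec, Matrix.one_mulVec, Matrix.smul_mulVec]
    rw [hmv, dotProduct_sub, dotProduct_smul, hvv, hq]
    simp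
  have hqP : q ≤ ‖P‖ := by
    set w : EuclideanSpace ℝ (Fin n) := (EuclideanSpace.equiv (Fin n) ℝ).symm (P *ᵥ x) with hw
    have h1 : q = inner (𝕜 := ℝ) v w := by
      rw [hinner w]
      rfl
    have h2 : inner (𝕜 := ℝ) v w ≤ ‖v‖ * ‖w‖ := real_inner_le_norm v w
    have h3 : ‖w‖ ≤ ‖P‖ * ‖v‖ := P.l2_opNorm_mulVec v
    rw [hvnorm] at h2 h3
    rw [h1]
    calc inner (𝕜 := ℝ) v w ≤ 1 * ‖w‖ := h2
      _ = ‖w‖ := one_mul _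
      _ ≤ ‖P‖ * 1 := h3
      _ = ‖P‖ := mul_one _
  have hPnn : 0 ≤ ‖P‖ := norm_nonneg _
  constructor
  · rw [heig2]
    have : s * q < 1 := by
      calc s * q ≤ s * ‖P‖ := mul_le_mul_of_nonneg_left hqP hs.le
        _ < s * s⁻¹ := mul_lt_mul_of_pos_left hPb hs
        _ = 1 := mul_inv_cancel₀ (ne_of_gt hs)
    linarith
  · rw [heig2]
    nlinarith

lemma gammaTau_eq {n : ℕ} (τ θ : ℝ) (P : Matrix (Fin n) (Fin n) ℝ)
    (hA : (1 - (θ*(1-τ)) • P : Matrix (Fin n) (Fin n) ℝ).IsHermitian) :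
    gammaTau τ θ P = ∑ i, gfun τ (hA.eigenvalues i) := by
  rw [gammaTau, Matrix.trace_add, Matrix.trace_add, Matrix.trace_smul, Matrix.trace_smul,
    Matrix.trace_smul, Matrix.trace_one, matRpow, matRpow, trace_matFun _ hA, trace_matFun _ hA]
  simp only [gfun, smul_eq_mul, Finset.sum_add_distrib, Finset.mul_sum, Finset.sum_const,
    Finset.card_univ, Fintype.card_fin, nsmul_eq_mul]
  ring

end Aux

theorem gammaTau_monotone_in_P {n : ℕ} (τ θ : ℝ)
    (hτ0 : 0 < τ) (hτ1 : τ < 1) (hθ : 0 < θ)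
    (P Q : Matrix (Fin n) (Fin n) ℝ)
    (hP : P.PosSemidef) (hQ : Q.PosSemidef)
    (hPQ : (P - Q).PosSemidef)
    (hPb : sigma1 P < (θ * (1 - τ))⁻¹) (hQb : sigma1 Q < (θ * (1 - τ))⁻¹) :
    gammaTau τ θ Q ≤ gammaTau τ θ P := by
  have hs : (0:ℝ) < θ * (1 - τ) := mul_pos hθ (by linarith)
  have hAP : (1 - (θ*(1-τ)) • P : Matrix (Fin n) (Fin n) ℝ).IsHermitian :=
    one_sub_smul_isHermitian hP.1 _
  have hAQ : (1 - (θ*(1-τ)) • Q : Matrix (Fin n) (Fin n) ℝ).IsHermitian :=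
    one_sub_smul_isHermitian hQ.1 _
  have hBA : ((1 - (θ*(1-τ)) • Q) - (1 - (θ*(1-τ)) • P) : Matrix (Fin n) (Fin n) ℝ)
      = (θ*(1-τ)) • (P - Q) := by
    rw [smul_sub]
    abel
  have hPSD : (((1 - (θ*(1-τ)) • Q) - (1 - (θ*(1-τ)) • P)) : Matrix (Fin n) (Fin n) ℝ).PosSemidef := by
    rw [hBA]
    exact smul_posSemidef hPQ hs.le
  rw [gammaTau_eq τ θ P hAP, gammaTau_eq τ θ Q hAQ]
  exact sum_f_eigen_le (gfun τ) (Set.Ioc 0 1) (convex_Ioc 0 1) (gfun_convexOn τ hτ0 hτ1)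
    (gfun_antitoneOn τ hτ0 hτ1) hAP hAQ hPSD
    (fun i => eig_mem_Ioc hP hs hPb hAP i) (fun i => eig_mem_Ioc hQ hs hQb hAQ i)
end

section
/- Let r be the standard Riccati mapping r(P) = A(P⁻¹ + Cᵀ(DDᵀ)⁻¹C)⁻¹Aᵀ + BBᵀ with P̄₀ = BBᵀ positive definite and P̄_{k+1} = r(P̄_k). Let {P_k} be any sequence of positive definite matrices satisfying P₀ > 0 and P_{k+1} = A(P_k⁻¹ − Φ_{k−1} + Cᵀ(DDᵀ)⁻¹C)⁻¹Aᵀ + BBᵀ for positive semidefinite matrices Φ_{k−1} such that each inverse exists and is positive definite. Then P_k ≥ P̄_q for all k ≥ q + 1 and any q ≥ 0. -/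
open Matrix
open scoped Matrix.Norms.L2Operator

variable {n : ℕ}

/-- Congruence preserves positive semidefiniteness (real case). -/
lemma conj_psd' {k l : ℕ} {M : Matrix (Fin l) (Fin l) ℝ} (hM : M.PosSemidef)
    (X : Matrix (Fin k) (Fin l) ℝ) : (X * M * Xᵀ).PosSemidef := by
  have := hM.mul_mul_conjTranspose_same X
  rwa [Matrix.conjTranspose_eq_transpose_of_trivial] at this

/-- Congruence by an invertible matrix preserves positive definiteness (real case). -/
lemma conj_pd' {k : ℕ} {M X : Matrix (Fin k) (Fin k) ℝ} (hM : M.PosDef)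
    (hX : IsUnit X) : (X * M * Xᵀ).PosDef := by
  refine Matrix.PosDef.of_dotProduct_mulVec_pos (conj_psd' hM.posSemidef X).isHermitian fun x hx => ?_
  have hXT : IsUnit Xᵀ := by
    rw [Matrix.isUnit_iff_isUnit_det, Matrix.det_transpose,
      ← Matrix.isUnit_iff_isUnit_det]
    exact hX
  have hy : Xᵀ *ᵥ x ≠ 0 := by
    intro h
    have hinj : Function.Injective (Xᵀ).mulVec :=
      Matrix.mulVec_injective_iff_isUnit.2 hXT
    exact hx (hinj (by simpa using h))
  have key : star x ⬝ᵥ ((X * M * Xᵀ) *ᵥ x) = star (Xᵀ *ᵥ x) ⬝ᵥ (M *ᵥ (Xᵀ *ᵥ x)) := by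
    simp only [star_trivial, ← Matrix.mulVec_mulVec, Matrix.mulVec_transpose,
      Matrix.dotProduct_mulVec]
  rw [key]
  exact hM.dotProduct_mulVec_pos hy

/-- A positive semidefinite real matrix is symmetric w.r.t. `ᵀ`. -/
lemma psd_transpose_eq {k : ℕ} {M : Matrix (Fin k) (Fin k) ℝ} (hM : M.PosSemidef) :
    Mᵀ = M := by
  have := hM.isHermitian
  rwa [Matrix.IsHermitian, Matrix.conjTranspose_eq_transpose_of_trivial] at this

open scoped MatrixOrder in
/-- If `M` is positive definite and `1 - M` is positive semidefinite then `M⁻¹ - 1`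
is positive semidefinite. -/
lemma inv_sub_one_psd {k : ℕ} {M : Matrix (Fin k) (Fin k) ℝ} (hM : M.PosDef)
    (h1 : (1 - M).PosSemidef) : (M⁻¹ - 1).PosSemidef := by
  have hMi : (M⁻¹).PosDef := hM.inv
  set N := CFC.sqrt (M⁻¹) with hNdef
  have hNN : N * N = M⁻¹ := CFC.sqrt_mul_sqrt_self _ hMi.posSemidef.nonneg
  have hNT : Nᵀ = N := psd_transpose_eq (CFC.sqrt_nonneg _).posSemidef
  have hNdet : IsUnit N.det := by
    have : N.det * N.det = (M⁻¹).det := by rw [← Matrix.det_mul, hNN]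
    have hMd : (M⁻¹).det ≠ 0 := ne_of_gt hMi.det_pos
    refine isUnit_iff_ne_zero.2 fun h => hMd ?_
    rw [← this, h, mul_zero]
  -- N * M = N⁻¹
  have hNM : N * M = N⁻¹ := by
    have : N * (N * M) = 1 := by
      rw [← Matrix.mul_assoc, hNN, Matrix.nonsing_inv_mul M ((Matrix.isUnit_iff_isUnit_det M).1 hM.isUnit)]
    · exact (Matrix.inv_eq_right_inv this).symm
  have hNMN : N * M * N = 1 := by
    rw [hNM, Matrix.nonsing_inv_mul N hNdet]
  have hkey : N * (1 - M) * Nᵀ = M⁻¹ - 1 := by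
    rw [hNT, Matrix.mul_sub, Matrix.sub_mul, Matrix.mul_one, hNN, hNMN]
  have := conj_psd' h1 N
  rwa [hkey] at this
  
open scoped MatrixOrder in
set_option maxHeartbeats 1000000 in
/-- Inversion is antitone on positive definite matrices. -/
lemma inv_sub_inv_psd {k : ℕ} {P Q : Matrix (Fin k) (Fin k) ℝ} (hP : P.PosDef)
    (hQ : Q.PosDef) (h : (Q - P).PosSemidef) : (P⁻¹ - Q⁻¹).PosSemidef := by
  have hQi : (Q⁻¹).PosDef := hQ.inv
  set S := CFC.sqrt (Q⁻¹) with hSdef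
  have hSS : S * S = Q⁻¹ := CFC.sqrt_mul_sqrt_self _ hQi.posSemidef.nonneg
  have hST : Sᵀ = S := psd_transpose_eq (CFC.sqrt_nonneg _).posSemidef
  have hSdet : IsUnit S.det := by
    have : S.det * S.det = (Q⁻¹).det := by rw [← Matrix.det_mul, hSS]
    have hQd : (Q⁻¹).det ≠ 0 := ne_of_gt hQi.det_pos
    refine isUnit_iff_ne_zero.2 fun h0 => hQd ?_
    rw [← this, h0, mul_zero]
  have hSunit : IsUnit S := (Matrix.isUnit_iff_isUnit_det S).2 hSdet
  -- S * Q = S⁻¹ and S * Q * S = 1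
  have hSQ : S * Q = S⁻¹ := by
    have : S * (S * Q) = 1 := by
      rw [← Matrix.mul_assoc, hSS, Matrix.nonsing_inv_mul Q ((Matrix.isUnit_iff_isUnit_det Q).1 hQ.isUnit)]
    exact (Matrix.inv_eq_right_inv this).symm
  have hSQS : S * Q * S = 1 := by rw [hSQ, Matrix.nonsing_inv_mul S hSdet]
  -- M := S * P * S is positive definite
  have hM : (S * P * S).PosDef := by
    have := conj_pd' hP hSunit
    rwa [hST] at this
  -- 1 - M is positive semidefinite
  have h1M : (1 - S * P * S).PosSemidef := by
    have := conj_psd' h S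
    have heq : S * (Q - P) * Sᵀ = 1 - S * P * S := by
      rw [hST, Matrix.mul_sub, Matrix.sub_mul, hSQS]
    rwa [heq] at this
  have h2 : ((S * P * S)⁻¹ - 1).PosSemidef := inv_sub_one_psd hM h1M
  have h3 := conj_psd' h2 S
  have heq : S * ((S * P * S)⁻¹ - 1) * Sᵀ = P⁻¹ - Q⁻¹ := by
    rw [hST, Matrix.mul_sub, Matrix.sub_mul, Matrix.mul_one, hSS]
    congr 1
    rw [Matrix.mul_inv_rev, Matrix.mul_inv_rev, ← Matrix.mul_assoc, ← Matrix.mul_assoc,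
      Matrix.mul_nonsing_inv S hSdet, Matrix.one_mul, Matrix.mul_assoc,
      Matrix.nonsing_inv_mul S hSdet, Matrix.mul_one]
  rwa [heq] at h3


theorem robust_sequence_lower_bound {n m p : ℕ}
    (A : Matrix (Fin n) (Fin n) ℝ) (B : Matrix (Fin n) (Fin m) ℝ)
    (C : Matrix (Fin p) (Fin n) ℝ) (D : Matrix (Fin p) (Fin m) ℝ)
    (hB : (B * Bᵀ).PosDef) (hD : IsUnit (D * Dᵀ))
    (Pbar : ℕ → Matrix (Fin n) (Fin n) ℝ)
    (h0 : Pbar 0 = B * Bᵀ)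
    (hrecbar : ∀ k, Pbar (k + 1) =
      A * ((Pbar k)⁻¹ + Cᵀ * (D * Dᵀ)⁻¹ * C)⁻¹ * Aᵀ + B * Bᵀ)
    (P Φ : ℕ → Matrix (Fin n) (Fin n) ℝ)
    (hP : ∀ k, (P k).PosDef)
    (hΦ : ∀ k, (Φ k).PosSemidef)
    (hinv : ∀ k, ((P k)⁻¹ - Φ k).PosDef)
    (hinv2 : ∀ k, ((P k)⁻¹ - Φ k + Cᵀ * (D * Dᵀ)⁻¹ * C).PosDef)
    (hrec : ∀ k, P (k + 1) =
      A * ((P k)⁻¹ - Φ k + Cᵀ * (D * Dᵀ)⁻¹ * C)⁻¹ * Aᵀ + B * Bᵀ) :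
    ∀ q k, q + 1 ≤ k → (P k - Pbar q).PosSemidef := by
  -- the noise terms
  have hDDt : (D * Dᵀ).PosSemidef := by
    have := Matrix.posSemidef_self_mul_conjTranspose D
    rwa [Matrix.conjTranspose_eq_transpose_of_trivial] at this
  have hS : (Cᵀ * (D * Dᵀ)⁻¹ * C).PosSemidef := by
    have := conj_psd' hDDt.inv Cᵀ
    rwa [Matrix.transpose_transpose] at this
  -- Pbar is positive definite
  have hPbar : ∀ q, (Pbar q).PosDef := by
    intro q
    induction q with
    | zero => rw [h0]; exact hB
    | succ q ih =>
      rw [hrecbar]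
      have hY : ((Pbar q)⁻¹ + Cᵀ * (D * Dᵀ)⁻¹ * C).PosDef := ih.inv.add_posSemidef hS
      exact Matrix.PosDef.posSemidef_add (conj_psd' hY.inv.posSemidef A) hB
  intro q
  induction q with
  | zero =>
    rintro (_ | k) hk
    · exact absurd hk (by omega)
    · rw [hrec k, h0, add_sub_cancel_right]
      exact conj_psd' (hinv2 k).inv.posSemidef A
  | succ q ih =>
    rintro (_ | k) hk
    · exact absurd hk (by omega)
    · have hIH : (P k - Pbar q).PosSemidef := ih k (by omega)
      set S := Cᵀ * (D * Dᵀ)⁻¹ * C with hSdef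
      have hX : ((P k)⁻¹ - Φ k + S).PosDef := hinv2 k
      have hY : ((Pbar q)⁻¹ + S).PosDef := (hPbar q).inv.add_posSemidef hS
      -- Y - X is PSD
      have hYX : (((Pbar q)⁻¹ + S) - ((P k)⁻¹ - Φ k + S)).PosSemidef := by
        have h1 : ((Pbar q)⁻¹ - (P k)⁻¹).PosSemidef :=
          inv_sub_inv_psd (hPbar q) (hP k) hIH
        have heq : ((Pbar q)⁻¹ + S) - ((P k)⁻¹ - Φ k + S)
            = ((Pbar q)⁻¹ - (P k)⁻¹) + Φ k := by abel
        rw [heq]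
        exact h1.add (hΦ k)
      have h2 : (((P k)⁻¹ - Φ k + S)⁻¹ - ((Pbar q)⁻¹ + S)⁻¹).PosSemidef :=
        inv_sub_inv_psd hX hY hYX
      have h3 := conj_psd' h2 A
      have heq : P (k + 1) - Pbar (q + 1)
          = A * (((P k)⁻¹ - Φ k + S)⁻¹ - ((Pbar q)⁻¹ + S)⁻¹) * Aᵀ := by
        rw [hrec k, hrecbar q, Matrix.mul_sub, Matrix.sub_mul]
        abel
      rw [heq]; exact h3
end
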